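/- Let 𝔤 be a Lie algebra over ℂ with a vector space direct sum decomposition 𝔤 = 𝔭⁺ ⊕ 𝔨 ⊕ 𝔭⁻ into Lie subalgebras with [𝔨,𝔭^±] ⊆ 𝔭^±, and set 𝔮 = 𝔨 ⊕ 𝔭⁻. Let V be a complex vector space carrying a 𝔤-module structure and a ℂ-linear action of a finite group Γ, together with a group homomorphism γ ↦ φ_γ from Γ to the Lie algebra automorphisms of 𝔤 such that φ_γ(𝔨) = 𝔨, φ_γ(𝔭^±) = 𝔭^±, and γ·(X·v) = φ_γ(X)·(γ·v) for all γ ∈ Γ, X ∈ 𝔤, v ∈ V. Call a subspace of V invariant if it is stable under both 𝔤 and Γ, and assume every invariant subspace has an invariant complement. Let v₀ ∈ V be a nonzero vector such that: (i) V is spanned by the vectors X₁⋯X_m·γ·v₀ with X_i ∈ 𝔤 and γ ∈ Γ; (ii) the 𝔨-submodule τ of V generated by v₀ is irreducible as a 𝔨-module; (iii) 𝔭⁻·v₀ = 0; (iv) the induced 𝔤-module L_τ := U(𝔤) ⊗_{U(𝔮)} τ (with 𝔭⁻ acting on τ by zero) is a semisimple 𝔨-module and dim_ℂ Hom_𝔨(τ,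 L_τ) = 1; (v) for every γ ∈ Γ with γ not the identity, no irreducible 𝔨-submodule of L_τ is 𝔨-isomorphic to an irreducible 𝔨-submodule of the twisted module (L_τ)^γ, where (L_τ)^γ has the same underlying space as L_τ with 𝔤-action X ∗ w := φ_γ(X)·w. Then V has no invariant subspaces other than 0 and V. -/

import Mathlib

universe u v

namespace Stmt8Aux

variable {K : Type*} {M : Type*} {N : Type*} {P : Type*}
  [AddCommGroup M] [Module ℂ M] [AddCommGroup N] [Module ℂ N]
  [AddCommGroup P] [Module ℂ P]

/-- Stability of a submodule under a family of endomorphisms. -/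
def St (α : K → Module.End ℂ M) (A : Submodule ℂ M) : Prop :=
  ∀ k : K, ∀ x ∈ A, α k x ∈ A

/-- Ambient irreducibility. -/
def AmbIrr (α : K → Module.End ℂ M) (A : Submodule ℂ M) : Prop :=
  A ≠ ⊥ ∧ ∀ W ≤ A, St α W → W = ⊥ ∨ W = A

/-- Equivariance of a map between two submodules. -/
def EqvP (α : K → Module.End ℂ M) (β : K → Module.End ℂ N)
    (A : Submodule ℂ M) (B : Submodule ℂ N) (e : A → B) : Prop :=
  ∀ (k : K) (x y : A), (y : M) = α k (x : M) → ((e y : N) = β k (e x : N))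

theorem St.bot (α : K → Module.End ℂ M) : St α (⊥ : Submodule ℂ M) := by
  intro k x hx
  rw [Submodule.mem_bot] at hx ⊢
  rw [hx, map_zero]

theorem St.inf {α : K → Module.End ℂ M} {A B : Submodule ℂ M}
    (hA : St α A) (hB : St α B) : St α (A ⊓ B) :=
  fun k x hx => ⟨hA k x hx.1, hB k x hx.2⟩

theorem St.sup {α : K → Module.End ℂ M} {A B : Submodule ℂ M}
    (hA : St α A) (hB : St α B) : St α (A ⊔ B) := by
  intro k x hx
  rcases Submodule.mem_sup.1 hx with ⟨a, ha, b, hb, rfl⟩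
  rw [map_add]
  exact Submodule.add_mem _ (Submodule.mem_sup_left (hA k a ha))
    (Submodule.mem_sup_right (hB k b hb))

theorem St.iSup {α : K → Module.End ℂ M} {J : Sort*} {D : J → Submodule ℂ M}
    (hD : ∀ j, St α (D j)) : St α (⨆ j, D j) := by
  intro k x hx
  refine Submodule.iSup_induction (motive := fun x => α k x ∈ ⨆ j, D j) D hx
    (fun j y hy => Submodule.mem_iSup_of_mem j (hD j k y hy)) (by simp) ?_
  intro y z hy hz
  rw [map_add]
  exact Submodule.add_mem _ hy hz

theorem eqvp_trans {α : K → Module.End ℂ M} {β : K → Module.End ℂ N}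
    {g : K → Module.End ℂ P}
    {A : Submodule ℂ M} {B : Submodule ℂ N} {Cs : Submodule ℂ P}
    {e : A → B} {f : B → Cs} (he : EqvP α β A B e) (hf : EqvP β g B Cs f) :
    EqvP α g A Cs (fun x => f (e x)) :=
  fun k x y h => hf k (e x) (e y) (he k x y h)

theorem eqvp_symm {α : K → Module.End ℂ M} {β : K → Module.End ℂ N}
    {A : Submodule ℂ M} {B : Submodule ℂ N}
    (e : ↥A ≃ₗ[ℂ] ↥B) (he : EqvP α β A B e) (hA : St α A) :
    EqvP β α B A e.symm := by
  intro k x y hxy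
  have ha2 : α k ((e.symm x : A) : M) ∈ A := hA k _ (e.symm x).2
  have h1 : ((e ⟨α k ((e.symm x : A) : M), ha2⟩ : B) : N)
      = β k ((e (e.symm x) : B) : N) := he k (e.symm x) ⟨_, ha2⟩ rfl
  have h2 : e ⟨α k ((e.symm x : A) : M), ha2⟩ = y := by
    apply Subtype.ext
    rw [h1, e.apply_symm_apply, ← hxy]
  have h3 : e.symm y = ⟨α k ((e.symm x : A) : M), ha2⟩ := by
    rw [← h2, e.symm_apply_apply]
  rw [h3]

theorem compl_exists (α : K → Module.End ℂ M) {J : Type*} (D : J → Submodule ℂ M)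
    (hDst : ∀ j, St α (D j))
    (hDirr : ∀ j, ∀ W ≤ D j, St α W → W = ⊥ ∨ W = D j)
    (htop : (⨆ j, D j) = (⊤ : Submodule ℂ M))
    (S B : Submodule ℂ M) (hS : St α S) (hB : St α B) (hdisj : S ⊓ B = ⊥) :
    ∃ T, B ≤ T ∧ St α T ∧ IsCompl S T := by
  have hub : ∀ c ⊆ {T : Submodule ℂ M | St α T ∧ S ⊓ T = ⊥},
      IsChain (· ≤ ·) c → ∀ y ∈ c,
      ∃ ub ∈ {T : Submodule ℂ M | St α T ∧ S ⊓ T = ⊥}, ∀ z ∈ c, z ≤ ub := by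
    intro c hc hchain y hy
    refine ⟨sSup c, ⟨?_, ?_⟩, fun z hz => le_sSup hz⟩
    · intro k x hx
      obtain ⟨t, htc, hxt⟩ :=
        (Submodule.mem_sSup_of_directed ⟨y, hy⟩ hchain.directedOn).1 hx
      exact (Submodule.mem_sSup_of_directed ⟨y, hy⟩ hchain.directedOn).2
        ⟨t, htc, (hc htc).1 k x hxt⟩
    · rw [eq_bot_iff]
      intro x hx
      obtain ⟨t, htc, hxt⟩ :=
        (Submodule.mem_sSup_of_directed ⟨y, hy⟩ hchain.directedOn).1 hx.2
      have hxm : x ∈ S ⊓ t := ⟨hx.1, hxt⟩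
      rw [(hc htc).2] at hxm
      exact hxm
  obtain ⟨T, hBT, hTs⟩ := zorn_le_nonempty₀
    {T : Submodule ℂ M | St α T ∧ S ⊓ T = ⊥} hub B ⟨hB, hdisj⟩
  have hTst : St α T := hTs.1.1
  have hST : S ⊓ T = ⊥ := hTs.1.2
  have hall : ∀ j, D j ≤ S ⊔ T := by
    intro j
    by_contra hnle
    have hWst : St α (D j ⊓ (S ⊔ T)) := (hDst j).inf (hS.sup hTst)
    rcases hDirr j (D j ⊓ (S ⊔ T)) inf_le_left hWst with hbot | heq
    · have hT'mem : St α (T ⊔ D j) ∧ S ⊓ (T ⊔ D j) = ⊥ := by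
        refine ⟨hTst.sup (hDst j), ?_⟩
        rw [eq_bot_iff]
        intro x hx
        obtain ⟨t, ht, d, hd, hsum⟩ := Submodule.mem_sup.1 hx.2
        have hdx : d = x - t := by rw [← hsum, add_sub_cancel_left]
        have hdmem : d ∈ D j ⊓ (S ⊔ T) := by
          refine ⟨hd, ?_⟩
          rw [hdx]
          exact Submodule.sub_mem _ (Submodule.mem_sup_left hx.1)
            (Submodule.mem_sup_right ht)
        rw [hbot] at hdmem
        have hd0 : d = 0 := hdmem
        have hxt : x = t := by rw [← hsum, hd0, add_zero]
        have hxST : x ∈ S ⊓ T := ⟨hx.1, hxt ▸ ht⟩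
        rw [hST] at hxST
        exact hxST
      have hle := hTs.2 hT'mem le_sup_left
      exact hnle (le_trans (le_trans le_sup_right hle) le_sup_right)
    · exact hnle (inf_eq_left.1 heq)
  refine ⟨T, hBT, hTst, disjoint_iff.2 hST, ?_⟩
  rw [codisjoint_iff, ← top_le_iff, ← htop]
  exact iSup_le hall

theorem proj_eqv (α : K → Module.End ℂ M) {S T : Submodule ℂ M} (h : IsCompl S T)
    (hS : St α S) (hT : St α T) (k : K) (v : M) :
    ((S.linearProjOfIsCompl T h (α k v)) : M)
      = α k (S.linearProjOfIsCompl T h v) := by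
  set π := S.linearProjOfIsCompl T h with hπ
  have hvT : v - (π v : M) ∈ T := by
    rw [← Submodule.linearProjOfIsCompl_apply_eq_zero_iff h, map_sub]
    have : π ((π v : M)) = π v := Submodule.linearProjOfIsCompl_apply_left h (π v)
    exact sub_eq_zero.2 this.symm
  have hv : v = (π v : M) + (v - (π v : M)) := by abel
  have hdec : α k v = α k (π v : M) + α k (v - (π v : M)) := by
    rw [← map_add, ← hv]
  rw [hdec, map_add]
  have h1 : π (α k (π v : M)) = ⟨α k (π v : M), hS k _ (π v).2⟩ :=
    Submodule.linearProjOfIsCompl_apply_left h ⟨α k (π v : M), hS k _ (π v).2⟩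
  have h2 : π (α k (v - (π v : M))) = 0 :=
    Submodule.projectionOnto_apply_of_mem_right h (hT k _ hvT)
  rw [h1, h2, add_zero]

theorem range_data {α : K → Module.End ℂ M} {β : K → Module.End ℂ N}
    {A : Submodule ℂ M}
    (hA : St α A) (hAirr : AmbIrr α A) (σ : ↥A →ₗ[ℂ] N)
    (hσ : ∀ (k : K) (x y : ↥A), (y : M) = α k (x : M) → σ y = β k (σ x))
    (hσ0 : σ ≠ 0) :
    Function.Injective σ ∧ St β (LinearMap.range σ)
      ∧ AmbIrr β (LinearMap.range σ) := by
  have hinj : Function.Injective σ := by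
    have hK0le : Submodule.map A.subtype (LinearMap.ker σ) ≤ A := by
      intro x hx
      obtain ⟨u, hu, rfl⟩ := Submodule.mem_map.1 hx
      exact u.2
    have hK0st : St α (Submodule.map A.subtype (LinearMap.ker σ)) := by
      intro k x hx
      rw [Submodule.mem_map] at hx ⊢
      obtain ⟨u, hu, rfl⟩ := hx
      refine ⟨⟨α k (u : M), hA k _ u.2⟩, ?_, rfl⟩
      rw [LinearMap.mem_ker] at hu ⊢
      rw [hσ k u ⟨α k (u : M), hA k _ u.2⟩ rfl, hu, map_zero]
    rcases hAirr.2 _ hK0le hK0st with hbot | htop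
    · rw [← LinearMap.ker_eq_bot, eq_bot_iff]
      intro u hu
      have h1 : (u : M) ∈ Submodule.map A.subtype (LinearMap.ker σ) := ⟨u, hu, rfl⟩
      rw [hbot] at h1
      have h0 : (u : M) = 0 := h1
      exact (Submodule.mem_bot ℂ).2 (Subtype.ext h0)
    · exfalso
      apply hσ0
      apply LinearMap.ext
      intro u
      have h1 : (u : M) ∈ Submodule.map A.subtype (LinearMap.ker σ) := by
        rw [htop]; exact u.2
      rw [Submodule.mem_map] at h1
      obtain ⟨w, hw, hwu⟩ := h1
      have h2 : w = u := Subtype.ext hwu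
      rw [← h2]
      simpa using hw
  have hstR : St β (LinearMap.range σ) := by
    intro k x hx
    rw [LinearMap.mem_range] at hx ⊢
    obtain ⟨u, rfl⟩ := hx
    exact ⟨⟨α k (u : M), hA k _ u.2⟩, hσ k u ⟨α k (u : M), hA k _ u.2⟩ rfl⟩
  have hRne : LinearMap.range σ ≠ ⊥ := by
    obtain ⟨x, hx, hx0⟩ := (Submodule.ne_bot_iff A).1 hAirr.1
    rw [Submodule.ne_bot_iff]
    refine ⟨σ ⟨x, hx⟩, ⟨_, rfl⟩, ?_⟩
    intro h0
    have h1 : (⟨x, hx⟩ : ↥A) = 0 := hinj (by rw [h0, map_zero])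
    exact hx0 (by simpa using congrArg Subtype.val h1)
  refine ⟨hinj, hstR, hRne, ?_⟩
  intro Ws hWle hWst
  have hUle : Submodule.map A.subtype (Submodule.comap σ Ws) ≤ A := by
    intro x hx
    obtain ⟨u, hu, rfl⟩ := Submodule.mem_map.1 hx
    exact u.2
  have hUst : St α (Submodule.map A.subtype (Submodule.comap σ Ws)) := by
    intro k x hx
    rw [Submodule.mem_map] at hx ⊢
    obtain ⟨u, hu, rfl⟩ := hx
    refine ⟨⟨α k (u : M), hA k _ u.2⟩, ?_, rfl⟩
    rw [Submodule.mem_comap] at hu ⊢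
    rw [hσ k u ⟨α k (u : M), hA k _ u.2⟩ rfl]
    exact hWst k _ hu
  rcases hAirr.2 _ hUle hUst with hbot | htop2
  · left
    rw [eq_bot_iff]
    intro w hw
    obtain ⟨u, rfl⟩ := LinearMap.mem_range.1 (hWle hw)
    have h1 : (u : M) ∈ Submodule.map A.subtype (Submodule.comap σ Ws) :=
      Submodule.mem_map.2 ⟨u, Submodule.mem_comap.2 hw, rfl⟩
    rw [hbot] at h1
    have h2 : u = 0 := Subtype.ext (by simpa using h1)
    rw [h2, map_zero]
    exact Submodule.zero_mem ⊥
  · right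
    apply le_antisymm hWle
    intro x hx
    obtain ⟨u, rfl⟩ := LinearMap.mem_range.1 hx
    have h1 : (u : M) ∈ Submodule.map A.subtype (Submodule.comap σ Ws) := by
      rw [htop2]; exact u.2
    rw [Submodule.mem_map] at h1
    obtain ⟨w, hw, hwu⟩ := h1
    have h2 : w = u := Subtype.ext hwu
    rw [← h2]
    exact Submodule.mem_comap.1 hw

theorem iso_make {α : K → Module.End ℂ M} {β : K → Module.End ℂ N}
    {A : Submodule ℂ M} {B : Submodule ℂ N}
    (hA : St α A) (hAirr : AmbIrr α A) (hBirr : AmbIrr β B)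
    (σ : ↥A →ₗ[ℂ] ↥B) (hσ : EqvP α β A B σ) (hσ0 : σ ≠ 0) :
    ∃ e : ↥A ≃ₗ[ℂ] ↥B, EqvP α β A B e := by
  have hσae : ∀ (k : K) (x y : ↥A), (y : M) = α k (x : M) →
      (B.subtype ∘ₗ σ) y = β k ((B.subtype ∘ₗ σ) x) := by
    intro k x y h
    exact hσ k x y h
  have hσa0 : B.subtype ∘ₗ σ ≠ 0 := by
    intro h0
    apply hσ0
    apply LinearMap.ext
    intro u
    have h1 : (B.subtype ∘ₗ σ) u = 0 := by rw [h0]; rfl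
    exact Subtype.ext (by simpa using h1)
  obtain ⟨hinj, hstR, hRirr⟩ := range_data hA hAirr (B.subtype ∘ₗ σ) hσae hσa0
  have hRle : LinearMap.range (B.subtype ∘ₗ σ) ≤ B := by
    intro x hx
    obtain ⟨u, rfl⟩ := LinearMap.mem_range.1 hx
    exact (σ u).2
  rcases hBirr.2 _ hRle hstR with hbot | hteq
  · exact absurd hbot hRirr.1
  · have hσinj : Function.Injective σ := by
      intro a b hab
      exact hinj (show (B.subtype ∘ₗ σ) a = (B.subtype ∘ₗ σ) b by
        simp only [LinearMap.comp_apply, hab])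
    have hσsurj : Function.Surjective σ := by
      intro b
      have hb : (b : N) ∈ LinearMap.range (B.subtype ∘ₗ σ) := by
        rw [hteq]; exact b.2
      obtain ⟨u, hu⟩ := LinearMap.mem_range.1 hb
      exact ⟨u, Subtype.ext hu⟩
    refine ⟨LinearEquiv.ofBijective σ ⟨hσinj, hσsurj⟩, ?_⟩
    intro k x y h
    exact hσ k x y h

/-- The endomorphism given by the Lie bracket action of an element. -/
def actEnd (𝔤 : Type u) [LieRing 𝔤] [LieAlgebra ℂ 𝔤] (M : Type*) [AddCommGroup M]
    [Module ℂ M] [LieRingModule 𝔤 M] [LieModule ℂ 𝔤 M] (X : 𝔤) :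
    Module.End ℂ M where
  toFun m := ⁅X, m⁆
  map_add' := lie_add X
  map_smul' c m := lie_smul c X m

@[simp] theorem actEnd_apply (𝔤 : Type u) [LieRing 𝔤] [LieAlgebra ℂ 𝔤] (M : Type*)
    [AddCommGroup M] [Module ℂ M] [LieRingModule 𝔤 M] [LieModule ℂ 𝔤 M]
    (X : 𝔤) (m : M) : actEnd 𝔤 M X m = ⁅X, m⁆ := rfl

end Stmt8Aux

open Stmt8Aux


/-- Non-connected version of the irreducibility criterion.  `𝔤 = 𝔭⁺ ⊕ 𝔨 ⊕ 𝔭⁻` is a Lie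
algebra over ℂ with `[𝔨,𝔭^±] ⊆ 𝔭^±`; `V` carries a `𝔤`-module structure and an action `ρ`
of a finite group `Γ`, compatible through a homomorphism `φ` from `Γ` to the Lie algebra
automorphisms of `𝔤` preserving `𝔨`, `𝔭⁺`, `𝔭⁻`: `γ·(X·v) = φ_γ(X)·(γ·v)`.  Every
invariant (i.e. `𝔤`- and `Γ`-stable) subspace is assumed to have an invariant complement.
`v₀ ≠ 0` satisfies: (i) `V` is spanned by the `X₁⋯X_m·γ·v₀`; (ii) the `𝔨`-submodule `τ`
generated by `v₀` is irreducible; (iii) `𝔭⁻·v₀ = 0`; (iv) `L_τ = U(𝔤) ⊗_{U(𝔮)} τ`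
(characterized by its universal property) is `𝔨`-semisimple with
`dim_ℂ Hom_𝔨(τ, L_τ) = 1`; (v) for `γ ≠ 1`, no irreducible `𝔨`-submodule of `L_τ` is
`𝔨`-isomorphic to one of the twist `(L_τ)^γ` (action `X ∗ w = φ_γ(X)·w`).  Then `V` has no
invariant subspaces other than `0` and `V`. -/
theorem stmt_8 {𝔤 : Type u} [LieRing 𝔤] [LieAlgebra ℂ 𝔤]
    (𝔨 𝔭p 𝔭m : LieSubalgebra ℂ 𝔤)
    -- `𝔤 = 𝔭⁺ ⊕ 𝔨 ⊕ 𝔭⁻` as vector spaces: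
    (hsup : (𝔭p : Submodule ℂ 𝔤) ⊔ (𝔨 : Submodule ℂ 𝔤) ⊔ (𝔭m : Submodule ℂ 𝔤) = ⊤)
    (hind₁ : (𝔭p : Submodule ℂ 𝔤) ⊓ ((𝔨 : Submodule ℂ 𝔤) ⊔ (𝔭m : Submodule ℂ 𝔤)) = ⊥)
    (hind₂ : (𝔨 : Submodule ℂ 𝔤) ⊓ (𝔭m : Submodule ℂ 𝔤) = ⊥)
    (hkp : ∀ X ∈ 𝔨, ∀ Y ∈ 𝔭p, ⁅X, Y⁆ ∈ 𝔭p)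
    (hkm : ∀ X ∈ 𝔨, ∀ Y ∈ 𝔭m, ⁅X, Y⁆ ∈ 𝔭m)
    {V : Type v} [AddCommGroup V] [Module ℂ V] [LieRingModule 𝔤 V] [LieModule ℂ 𝔤 V]
    {Γ : Type*} [Group Γ] [Finite Γ] (ρ : Γ →* (V ≃ₗ[ℂ] V))
    -- `φ` is a group homomorphism from `Γ` to the Lie algebra automorphisms of `𝔤` ...
    (φ : Γ → (𝔤 ≃ₗ⁅ℂ⁆ 𝔤))
    (hφone : ∀ X : 𝔤, φ 1 X = X)
    (hφmul : ∀ (γ γ' : Γ) (X : 𝔤), φ (γ * γ') X = φ γ (φ γ' X))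
    -- ... preserving `𝔨`, `𝔭⁺` and `𝔭⁻`:
    (hφk : ∀ γ : Γ, (φ γ) '' (𝔨 : Set 𝔤) = (𝔨 : Set 𝔤))
    (hφp : ∀ γ : Γ, (φ γ) '' (𝔭p : Set 𝔤) = (𝔭p : Set 𝔤))
    (hφm : ∀ γ : Γ, (φ γ) '' (𝔭m : Set 𝔤) = (𝔭m : Set 𝔤))
    -- compatibility `γ·(X·v) = φ_γ(X)·(γ·v)`:
    (hcomp : ∀ (γ : Γ) (X : 𝔤) (w : V), ρ γ ⁅X, w⁆ = ⁅φ γ X, ρ γ w⁆)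
    -- every invariant subspace has an invariant complement:
    (hcompl : ∀ W : Submodule ℂ V,
      (∀ X : 𝔤, ∀ w ∈ W, ⁅X, w⁆ ∈ W) → (∀ γ : Γ, ∀ w ∈ W, ρ γ w ∈ W) →
      ∃ W' : Submodule ℂ V,
        ((∀ X : 𝔤, ∀ w ∈ W', ⁅X, w⁆ ∈ W') ∧ (∀ γ : Γ, ∀ w ∈ W', ρ γ w ∈ W')) ∧
        IsCompl W W')
    (v₀ : V) (hv₀ : v₀ ≠ 0)
    -- (i) `V` is spanned by the vectors `X₁⋯X_m·γ·v₀`: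
    (hgen : ∀ W : Submodule ℂ V, (∀ γ : Γ, ρ γ v₀ ∈ W) →
      (∀ X : 𝔤, ∀ w ∈ W, ⁅X, w⁆ ∈ W) → W = ⊤)
    -- `τ` is the `𝔨`-submodule of `V` generated by `v₀`:
    (τ : Submodule ℂ V) (hv₀τ : v₀ ∈ τ)
    (hτstab : ∀ X ∈ 𝔨, ∀ w ∈ τ, ⁅X, w⁆ ∈ τ)
    (hτmin : ∀ W : Submodule ℂ V, v₀ ∈ W → (∀ X ∈ 𝔨, ∀ w ∈ W, ⁅X, w⁆ ∈ W) → τ ≤ W)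
    -- (ii) `τ` is irreducible as a `𝔨`-module:
    (hτne : τ ≠ ⊥)
    (hτirr : ∀ W ≤ τ, (∀ X ∈ 𝔨, ∀ w ∈ W, ⁅X, w⁆ ∈ W) → W = ⊥ ∨ W = τ)
    -- (iii) `𝔭⁻ · v₀ = 0`:
    (hann : ∀ Y ∈ 𝔭m, ⁅Y, v₀⁆ = 0)
    -- `L` is the induced `𝔤`-module `L_τ = U(𝔤) ⊗_{U(𝔮)} τ`, characterized by the
    -- universal property `Hom_𝔤(L_τ, M) ≅ Hom_𝔮(τ, M)`:
    (L : Type (max u v)) [AddCommGroup L] [Module ℂ L] [LieRingModule 𝔤 L] [LieModule ℂ 𝔤 L]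
    (ι : τ →ₗ[ℂ] L)
    (hιeq : ∀ (X : 𝔤) (hX : X ∈ 𝔨) (t : τ),
      ι ⟨⁅X, (t : V)⁆, hτstab X hX (t : V) t.2⟩ = ⁅X, ι t⁆)
    (hιann : ∀ Y ∈ 𝔭m, ∀ t : τ, ⁅Y, ι t⁆ = 0)
    (huniv : ∀ (M : Type (max u v)) [AddCommGroup M] [Module ℂ M]
        [LieRingModule 𝔤 M] [LieModule ℂ 𝔤 M],
      ∀ f : τ →ₗ[ℂ] M,
        (∀ (X : 𝔤) (hX : X ∈ 𝔨) (t : τ),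
          f ⟨⁅X, (t : V)⁆, hτstab X hX (t : V) t.2⟩ = ⁅X, f t⁆) →
        (∀ Y ∈ 𝔭m, ∀ t : τ, ⁅Y, f t⁆ = 0) →
        ∃! F : L →ₗ[ℂ] M, (∀ (X : 𝔤) (x : L), F ⁅X, x⁆ = ⁅X, F x⁆) ∧ F ∘ₗ ι = f)
    -- (iv) `L_τ` is a semisimple `𝔨`-module ...
    (hss : ∃ (I : Type (max u v)) (C : I → Submodule ℂ L),
      (∀ i, (∀ X ∈ 𝔨, ∀ w ∈ C i, ⁅X, w⁆ ∈ C i) ∧ C i ≠ ⊥ ∧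
        ∀ W ≤ C i, (∀ X ∈ 𝔨, ∀ w ∈ W, ⁅X, w⁆ ∈ W) → W = ⊥ ∨ W = C i) ∧
      iSup C = ⊤)
    -- ... and `dim_ℂ Hom_𝔨(τ, L_τ) = 1`:
    (hmult : ∃ f₀ : τ →ₗ[ℂ] L, f₀ ≠ 0 ∧
      (∀ (X : 𝔤) (hX : X ∈ 𝔨) (t : τ),
        f₀ ⟨⁅X, (t : V)⁆, hτstab X hX (t : V) t.2⟩ = ⁅X, f₀ t⁆) ∧
      ∀ f : τ →ₗ[ℂ] L,
        (∀ (X : 𝔤) (hX : X ∈ 𝔨) (t : τ),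
          f ⟨⁅X, (t : V)⁆, hτstab X hX (t : V) t.2⟩ = ⁅X, f t⁆) →
        ∃ c : ℂ, f = c • f₀)
    -- (v) for `γ ≠ 1`, no irreducible `𝔨`-submodule of `L_τ` is `𝔨`-isomorphic to an
    -- irreducible `𝔨`-submodule of the twist `(L_τ)^γ` (with action `X ∗ w = φ_γ(X)·w`):
    (hdistinct : ∀ γ : Γ, γ ≠ 1 →
      ∀ (W₁ : Submodule ℂ L) (h₁ : ∀ X ∈ 𝔨, ∀ w ∈ W₁, ⁅X, w⁆ ∈ W₁),
        W₁ ≠ ⊥ → (∀ W ≤ W₁, (∀ X ∈ 𝔨, ∀ w ∈ W, ⁅X, w⁆ ∈ W) → W = ⊥ ∨ W = W₁) →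
      ∀ (W₂ : Submodule ℂ L) (h₂ : ∀ X ∈ 𝔨, ∀ w ∈ W₂, ⁅φ γ X, w⁆ ∈ W₂),
        W₂ ≠ ⊥ → (∀ W ≤ W₂, (∀ X ∈ 𝔨, ∀ w ∈ W, ⁅φ γ X, w⁆ ∈ W) → W = ⊥ ∨ W = W₂) →
      ¬ ∃ e : W₁ ≃ₗ[ℂ] W₂, ∀ (X : 𝔤) (hX : X ∈ 𝔨) (w : W₁),
          (e ⟨⁅X, (w : L)⁆, h₁ X hX (w : L) w.2⟩ : W₂)
            = ⟨⁅φ γ X, ((e w : W₂) : L)⁆, h₂ X hX ((e w : W₂) : L) (e w).2⟩) :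
    -- conclusion: no invariant subspaces other than `0` and `V`
    ∀ W : Submodule ℂ V,
      (∀ X : 𝔤, ∀ w ∈ W, ⁅X, w⁆ ∈ W) → (∀ γ : Γ, ∀ w ∈ W, ρ γ w ∈ W) →
      W = ⊥ ∨ W = ⊤ := by
  classical
  intro W hWg hWΓ
  -- basic facts about φ
  have hφmem : ∀ (γ : Γ), ∀ X ∈ 𝔨, φ γ X ∈ 𝔨 := by
    intro γ X hX
    have h1 : φ γ X ∈ (φ γ) '' (𝔨 : Set 𝔤) := ⟨X, hX, rfl⟩
    rw [hφk γ] at h1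
    exact h1
  have hφsurj : ∀ (γ : Γ), ∀ Y ∈ 𝔨, ∃ X ∈ 𝔨, φ γ X = Y := by
    intro γ Y hY
    have h1 : Y ∈ (φ γ) '' (𝔨 : Set 𝔤) := by rw [hφk γ]; exact hY
    obtain ⟨X, hX, hXY⟩ := h1
    exact ⟨X, hX, hXY⟩
  have hφinv : ∀ (γ : Γ) (X : 𝔤), φ γ (φ γ⁻¹ X) = X := by
    intro γ X
    rw [← hφmul, mul_inv_cancel, hφone]
  have hφinv' : ∀ (γ : Γ) (X : 𝔤), φ γ⁻¹ (φ γ X) = X := by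
    intro γ X
    rw [← hφmul, inv_mul_cancel, hφone]
  -- 𝔭⁻ annihilates τ
  have hτ0 : ∀ Y ∈ 𝔭m, ∀ w ∈ τ, ⁅Y, w⁆ = 0 := by
    set A : Submodule ℂ V :=
      { carrier := {v | ∀ Y ∈ 𝔭m, ⁅Y, v⁆ = 0}
        add_mem' := by
          intro a b ha hb Y hY
          rw [lie_add, ha Y hY, hb Y hY, add_zero]
        zero_mem' := by
          intro Y hY
          rw [lie_zero]
        smul_mem' := by
          intro c x hx Y hY
          rw [lie_smul, hx Y hY, smul_zero] } with hAdef
    have hAstab : ∀ X ∈ 𝔨, ∀ w ∈ A, ⁅X, w⁆ ∈ A := by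
      intro X hX w hw Y hY
      have h1 : ⁅Y, X⁆ = -⁅X, Y⁆ := by rw [← lie_skew X Y, neg_neg]
      have hYX : ⁅Y, X⁆ ∈ 𝔭m := by
        rw [h1]
        exact neg_mem (hkm X hX Y hY)
      rw [leibniz_lie Y X w, hw Y hY, lie_zero, add_zero]
      exact hw ⁅Y, X⁆ hYX
    have hmin := hτmin A (fun Y hY => hann Y hY) hAstab
    intro Y hY w hw
    exact hmin hw Y hY
  have hτ0' : ∀ Y ∈ 𝔭m, ∀ t : ↥τ, ⁅Y, (t : V)⁆ = 0 := fun Y hY t => hτ0 Y hY _ t.2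
  -- construct F : L →ₗ V via the universal property applied to ULift V
  letI instLRM : LieRingModule 𝔤 (ULift.{u} V) :=
    { bracket := fun X w => ⟨⁅X, w.down⁆⟩
      add_lie := fun X Y w => ULift.down_injective (add_lie X Y w.down)
      lie_add := fun X w w' => ULift.down_injective (lie_add X w.down w'.down)
      leibniz_lie := fun X Y w => ULift.down_injective (leibniz_lie X Y w.down) }
  letI instLM : LieModule ℂ 𝔤 (ULift.{u} V) :=
    { smul_lie := fun t X w => ULift.down_injective (smul_lie t X w.down)
      lie_smul := fun t X w => ULift.down_injective (lie_smul t X w.down) }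
  obtain ⟨F', hF'props, -⟩ := huniv (ULift.{u} V)
    ((ULift.moduleEquiv.symm : V ≃ₗ[ℂ] ULift.{u} V).toLinearMap ∘ₗ τ.subtype)
    (fun X hX t => rfl)
    (fun Y hY t => ULift.down_injective (hτ0' Y hY t))
  set F : L →ₗ[ℂ] V := (ULift.moduleEquiv : ULift.{u} V ≃ₗ[ℂ] V).toLinearMap ∘ₗ F'
    with hFdef
  have hFbr : ∀ (X : 𝔤) (x : L), F ⁅X, x⁆ = ⁅X, F x⁆ := by
    intro X x
    exact congrArg ULift.down (hF'props.1 X x)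
  have hFι : ∀ t : ↥τ, F (ι t) = (t : V) := by
    intro t
    exact congrArg ULift.down (LinearMap.congr_fun hF'props.2 t)
  have hιinj : Function.Injective ι := by
    intro a b hab
    apply Subtype.ext
    rw [← hFι a, ← hFι b, hab]
  -- the actions
  set aV : ↥𝔨 → Module.End ℂ V := fun k => actEnd 𝔤 V (k : 𝔤) with haV
  set aL : ↥𝔨 → Module.End ℂ L := fun k => actEnd 𝔤 L (k : 𝔤) with haL
  set aT : Γ → ↥𝔨 → Module.End ℂ L := fun γ k => actEnd 𝔤 L (φ γ⁻¹ (k : 𝔤)) with haT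
  have hstV : ∀ Wx : Submodule ℂ V,
      (∀ X ∈ 𝔨, ∀ w ∈ Wx, ⁅X, w⁆ ∈ Wx) ↔ St aV Wx := by
    intro Wx
    constructor
    · intro h k x hx
      exact h (k : 𝔤) k.2 x hx
    · intro h X hX w hw
      exact h ⟨X, hX⟩ w hw
  have hstL : ∀ Wx : Submodule ℂ L,
      (∀ X ∈ 𝔨, ∀ w ∈ Wx, ⁅X, w⁆ ∈ Wx) ↔ St aL Wx := by
    intro Wx
    constructor
    · intro h k x hx
      exact h (k : 𝔤) k.2 x hx
    · intro h X hX w hw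
      exact h ⟨X, hX⟩ w hw
  have hstT : ∀ (γ : Γ) (Wx : Submodule ℂ L),
      (∀ X ∈ 𝔨, ∀ w ∈ Wx, ⁅φ γ⁻¹ X, w⁆ ∈ Wx) ↔ St (aT γ) Wx := by
    intro γ Wx
    constructor
    · intro h k x hx
      exact h (k : 𝔤) k.2 x hx
    · intro h X hX w hw
      exact h ⟨X, hX⟩ w hw
  have hstTL : ∀ (γ : Γ) (Wx : Submodule ℂ L), St (aT γ) Wx → St aL Wx := by
    intro γ Wx h k x hx
    obtain ⟨X, hX, hXk⟩ := hφsurj γ⁻¹ (k : 𝔤) k.2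
    have h1 := h ⟨X, hX⟩ x hx
    show ⁅(k : 𝔤), x⁆ ∈ Wx
    rw [← hXk]
    exact h1
  -- the semisimple decomposition of L
  obtain ⟨I, C, hC⟩ := hss
  have hCst : ∀ i, St aL (C i) := fun i => (hstL (C i)).1 (hC.1 i).1
  have hCne : ∀ i, C i ≠ ⊥ := fun i => (hC.1 i).2.1
  have hCirr : ∀ i, ∀ Wx ≤ C i, St aL Wx → Wx = ⊥ ∨ Wx = C i :=
    fun i Wx hle hst => (hC.1 i).2.2 Wx hle ((hstL Wx).2 hst)
  have hCtop : (⨆ i, C i) = ⊤ := hC.2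
  have hCstT : ∀ (γ : Γ) (i : I), St (aT γ) (C i) := by
    intro γ i k x hx
    show ⁅φ γ⁻¹ (k : 𝔤), x⁆ ∈ C i
    exact hCst i ⟨φ γ⁻¹ (k : 𝔤), hφmem γ⁻¹ (k : 𝔤) k.2⟩ x hx
  have hCirrT : ∀ (γ : Γ) (i : I), ∀ Wx ≤ C i, St (aT γ) Wx → Wx = ⊥ ∨ Wx = C i :=
    fun γ i Wx hle hst => hCirr i Wx hle (hstTL γ Wx hst)
  have hCAmbT : ∀ (γ : Γ) (i : I), AmbIrr (aT γ) (C i) :=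
    fun γ i => ⟨hCne i, hCirrT γ i⟩
  -- the maps ξ γ and the family D
  set ξ : Γ → (L →ₗ[ℂ] V) := fun γ => (ρ γ : V ≃ₗ[ℂ] V).toLinearMap ∘ₗ F with hξdef
  have hξbr : ∀ (γ : Γ) (X : 𝔤) (x : L), ⁅X, ξ γ x⁆ = ξ γ ⁅φ γ⁻¹ X, x⁆ := by
    intro γ X x
    have h1 : ρ γ ⁅φ γ⁻¹ X, F x⁆ = ⁅φ γ (φ γ⁻¹ X), ρ γ (F x)⁆ := hcomp γ _ _
    rw [hφinv γ X] at h1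
    show ⁅X, ρ γ (F x)⁆ = ρ γ (F ⁅φ γ⁻¹ X, x⁆)
    rw [hFbr]
    exact h1.symm
  have hξ1 : ∀ x : L, ξ 1 x = F x := by
    intro x
    show (ρ 1) (F x) = F x
    rw [map_one]
    rfl
  set D : Γ × I → Submodule ℂ V := fun p => Submodule.map (ξ p.1) (C p.2) with hDdef
  have hDst : ∀ p, St aV (D p) := by
    intro p k x hx
    rw [hDdef] at hx ⊢
    rw [Submodule.mem_map] at hx ⊢
    obtain ⟨c, hc, rfl⟩ := hx
    refine ⟨⁅φ p.1⁻¹ (k : 𝔤), c⁆,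
      hCst p.2 ⟨φ p.1⁻¹ (k : 𝔤), hφmem p.1⁻¹ (k : 𝔤) k.2⟩ c hc, ?_⟩
    show ξ p.1 ⁅φ p.1⁻¹ (k : 𝔤), c⁆ = ⁅(k : 𝔤), ξ p.1 c⁆
    exact (hξbr p.1 (k : 𝔤) c).symm
  have hDirr : ∀ p, ∀ Wx ≤ D p, St aV Wx → Wx = ⊥ ∨ Wx = D p := by
    intro p Wx hle hst
    have hW'st : St aL (Submodule.comap (ξ p.1) Wx ⊓ C p.2) := by
      intro k x hx
      rw [Submodule.mem_inf] at hx ⊢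
      refine ⟨?_, hCst p.2 k x hx.2⟩
      rw [Submodule.mem_comap]
      have h2 := hξbr p.1 (φ p.1 (k : 𝔤)) x
      rw [hφinv' p.1 (k : 𝔤)] at h2
      show ξ p.1 ⁅(k : 𝔤), x⁆ ∈ Wx
      rw [← h2]
      exact hst ⟨φ p.1 (k : 𝔤), hφmem p.1 (k : 𝔤) k.2⟩ (ξ p.1 x)
        (Submodule.mem_comap.1 hx.1)
    rcases hCirr p.2 (Submodule.comap (ξ p.1) Wx ⊓ C p.2) inf_le_right hW'st
      with hbot | heq
    · left
      rw [eq_bot_iff]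
      intro w hw
      obtain ⟨c, hc, rfl⟩ := Submodule.mem_map.1 (hle hw)
      have h1 : c ∈ Submodule.comap (ξ p.1) Wx ⊓ C p.2 :=
        ⟨Submodule.mem_comap.2 hw, hc⟩
      rw [hbot] at h1
      have hc0 : c = 0 := h1
      rw [hc0, map_zero]
      exact Submodule.zero_mem ⊥
    · right
      apply le_antisymm hle
      intro x hx
      obtain ⟨c, hc, rfl⟩ := Submodule.mem_map.1 hx
      have h1 : c ∈ Submodule.comap (ξ p.1) Wx ⊓ C p.2 := by
        rw [heq]; exact hc
      exact Submodule.mem_comap.1 h1.1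
  -- the D's span V
  have hrange_st : ∀ (γ : Γ) (X : 𝔤), ∀ w ∈ LinearMap.range (ξ γ),
      ⁅X, w⁆ ∈ LinearMap.range (ξ γ) := by
    intro γ X w hw
    obtain ⟨x, rfl⟩ := LinearMap.mem_range.1 hw
    rw [hξbr]
    exact ⟨_, rfl⟩
  have hUtop : (⨆ γ : Γ, LinearMap.range (ξ γ)) = ⊤ := by
    apply hgen
    · intro γ
      apply Submodule.mem_iSup_of_mem γ
      refine ⟨ι ⟨v₀, hv₀τ⟩, ?_⟩
      show ρ γ (F (ι ⟨v₀, hv₀τ⟩)) = ρ γ v₀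
      rw [hFι]
    · intro X w hw
      refine Submodule.iSup_induction
        (motive := fun w => ⁅X, w⁆ ∈ ⨆ γ : Γ, LinearMap.range (ξ γ)) _ hw ?_ ?_ ?_
      · intro γ x hx
        exact Submodule.mem_iSup_of_mem γ (hrange_st γ X x hx)
      · show ⁅X, (0 : V)⁆ ∈ _
        rw [lie_zero]
        exact Submodule.zero_mem _
      · intro a b ha hb
        show ⁅X, a + b⁆ ∈ _
        rw [lie_add]
        exact Submodule.add_mem _ ha hb
  have hrange_eq : ∀ γ : Γ, LinearMap.range (ξ γ) = ⨆ i, D (γ, i) := by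
    intro γ
    rw [LinearMap.range_eq_map, ← hCtop, Submodule.map_iSup]
  have hDtop : (⨆ p : Γ × I, D p) = ⊤ := by
    rw [iSup_prod, ← hUtop]
    exact iSup_congr fun γ => (hrange_eq γ).symm
  -- V₁ and V₂
  set PS₁ : Set (Γ × I) := {p | p.1 = 1} with hPS₁
  set PS₂ : Set (Γ × I) := {p | p.1 ≠ 1} with hPS₂
  set V₁ : Submodule ℂ V := LinearMap.range F with hV₁def
  set V₂ : Submodule ℂ V := ⨆ q : PS₂, D q with hV₂def
  have hV₁r : V₁ = LinearMap.range (ξ 1) := by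
    apply le_antisymm
    · intro x hx
      obtain ⟨y, rfl⟩ := LinearMap.mem_range.1 hx
      exact ⟨y, hξ1 y⟩
    · intro x hx
      obtain ⟨y, rfl⟩ := LinearMap.mem_range.1 hx
      rw [hξ1]
      exact ⟨y, rfl⟩
  have hV₁st : St aV V₁ := by
    intro k x hx
    obtain ⟨y, rfl⟩ := LinearMap.mem_range.1 hx
    show ⁅(k : 𝔤), F y⁆ ∈ V₁
    rw [← hFbr]
    exact ⟨_, rfl⟩
  have hV₂st : St aV V₂ := St.iSup (fun q => hDst q)
  have hV₁eq : V₁ = ⨆ q : PS₁, D q := by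
    apply le_antisymm
    · rw [hV₁r, hrange_eq 1]
      apply iSup_le
      intro i
      exact le_iSup_of_le ⟨(1, i), rfl⟩ le_rfl
    · apply iSup_le
      rintro ⟨⟨γ, i⟩, hq⟩
      have hγ : γ = 1 := hq
      subst hγ
      rw [hV₁r, hrange_eq 1]
      exact le_iSup (fun i => D (1, i)) i
  have hV₁V₂top : V₁ ⊔ V₂ = ⊤ := by
    rw [← top_le_iff, ← hDtop]
    apply iSup_le
    intro p
    by_cases hp : p.1 = 1
    · apply le_sup_of_le_left
      rw [hV₁eq]
      exact le_iSup_of_le ⟨p, hp⟩ le_rfl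
    · apply le_sup_of_le_right
      exact le_iSup_of_le ⟨p, hp⟩ le_rfl
  -- the key lemma
  have key : ∀ (PS : Set (Γ × I)) (S₂ : Submodule ℂ V), St aV S₂ → AmbIrr aV S₂ →
      S₂ ≤ (⨆ q : PS, D q) →
      ∃ p : Γ × I, p ∈ PS ∧
        ∃ e : ↥(C p.2) ≃ₗ[ℂ] ↥S₂, EqvP (aT p.1) aV (C p.2) S₂ e := by
    intro PS S₂ hS₂st hS₂irr hS₂le
    obtain ⟨T, -, hTst, hTcompl⟩ := compl_exists aV D hDst hDirr hDtop S₂ ⊥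
      hS₂st (St.bot aV) (by simp)
    set π := S₂.linearProjOfIsCompl T hTcompl with hπ
    have hπe := proj_eqv aV hTcompl hS₂st hTst
    have hexp : ∃ p : Γ × I, p ∈ PS ∧ ∃ x ∈ D p, (π x : V) ≠ 0 := by
      by_contra hno
      push_neg at hno
      obtain ⟨s, hs, hs0⟩ := (Submodule.ne_bot_iff S₂).1 hS₂irr.1
      have hsup : S₂ ≤ LinearMap.ker (S₂.subtype ∘ₗ π) := by
        refine le_trans hS₂le (iSup_le ?_)
        rintro ⟨p, hp⟩ x hx
        rw [LinearMap.mem_ker]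
        exact hno p hp x hx
      have h1 := hsup hs
      rw [LinearMap.mem_ker] at h1
      have h1b : (π s : V) = 0 := h1
      have h2 : π s = ⟨s, hs⟩ :=
        Submodule.linearProjOfIsCompl_apply_left hTcompl ⟨s, hs⟩
      rw [h2] at h1b
      exact hs0 h1b
    obtain ⟨p, hpPS, x, hxD, hx0⟩ := hexp
    set σp : ↥(D p) →ₗ[ℂ] ↥S₂ := π ∘ₗ (D p).subtype with hσp
    have hσp0 : σp ≠ 0 := by
      intro h0
      apply hx0
      have h1 : σp ⟨x, hxD⟩ = 0 := by rw [h0]; rfl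
      have h2 : π x = (0 : ↥S₂) := h1
      rw [h2]
      rfl
    have hDne : D p ≠ ⊥ := by
      intro hbot
      apply hx0
      have h1 : x = 0 := by
        have := hxD
        rw [hbot] at this
        exact this
      rw [h1, map_zero]
      rfl
    have hDAmb : AmbIrr aV (D p) := ⟨hDne, hDirr p⟩
    have hσpe : EqvP aV aV (D p) S₂ σp := by
      intro k a b hab
      show (π (b : V) : V) = aV k (π (a : V) : V)
      rw [hab]
      exact hπe k (a : V)
    obtain ⟨e₁, he₁⟩ := iso_make (hDst p) hDAmb hS₂irr σp hσpe hσp0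
    have hmapsto : ∀ c ∈ C p.2, ξ p.1 c ∈ D p :=
      fun c hc => Submodule.mem_map.2 ⟨c, hc, rfl⟩
    set σξ : ↥(C p.2) →ₗ[ℂ] ↥(D p) := (ξ p.1).restrict hmapsto with hσξ
    have hσξe : EqvP (aT p.1) aV (C p.2) (D p) σξ := by
      intro k a b hab
      have hb : (σξ b : V) = ξ p.1 (b : L) := LinearMap.restrict_coe_apply _ _ _
      have ha : (σξ a : V) = ξ p.1 (a : L) := LinearMap.restrict_coe_apply _ _ _
      rw [hb, ha, hab]
      exact (hξbr p.1 (k : 𝔤) (a : L)).symm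
    have hσξ0 : σξ ≠ 0 := by
      intro h0
      obtain ⟨d, hd, hd0⟩ := (Submodule.ne_bot_iff (D p)).1 hDne
      obtain ⟨c, hc, rfl⟩ := Submodule.mem_map.1 hd
      apply hd0
      have h1 : σξ ⟨c, hc⟩ = 0 := by rw [h0]; rfl
      have h2 : (σξ ⟨c, hc⟩ : V) = ξ p.1 c := LinearMap.restrict_coe_apply _ _ _
      rw [h1] at h2
      exact h2.symm
    obtain ⟨e₀, he₀⟩ := iso_make (hCstT p.1 p.2) (hCAmbT p.1 p.2) hDAmb σξ hσξe hσξ0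
    refine ⟨p, hpPS, e₀.trans e₁, ?_⟩
    intro k a b hab
    simp only [LinearEquiv.trans_apply]
    exact he₁ k (e₀ a) (e₀ b) (he₀ k a b hab)
  -- V₁ ⊓ V₂ = ⊥
  have hV12 : V₁ ⊓ V₂ = ⊥ := by
    by_contra hne12
    have hNst : St aV (V₁ ⊓ V₂) := hV₁st.inf hV₂st
    obtain ⟨T, -, hTst, hTc⟩ := compl_exists aV D hDst hDirr hDtop (V₁ ⊓ V₂) ⊥
      hNst (St.bot aV) (by simp)
    set πN := (V₁ ⊓ V₂).linearProjOfIsCompl T hTc with hπN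
    have hπNe := proj_eqv aV hTc hNst hTst
    have hexp : ∃ p : Γ × I, ∃ x ∈ D p, (πN x : V) ≠ 0 := by
      by_contra hno
      push_neg at hno
      obtain ⟨s, hs, hs0⟩ := (Submodule.ne_bot_iff (V₁ ⊓ V₂)).1 hne12
      have hker : (⊤ : Submodule ℂ V) ≤ LinearMap.ker ((V₁ ⊓ V₂).subtype ∘ₗ πN) := by
        rw [← hDtop]
        refine iSup_le ?_
        intro p x hx
        rw [LinearMap.mem_ker]
        exact hno p x hx
      have h1 := hker (Submodule.mem_top : s ∈ ⊤)
      rw [LinearMap.mem_ker] at h1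
      have h1b : (πN s : V) = 0 := h1
      have h2 : πN s = ⟨s, hs⟩ :=
        Submodule.linearProjOfIsCompl_apply_left hTc ⟨s, hs⟩
      rw [h2] at h1b
      exact hs0 h1b
    obtain ⟨p, x, hxD, hx0⟩ := hexp
    set σm : ↥(D p) →ₗ[ℂ] V := (V₁ ⊓ V₂).subtype ∘ₗ (πN ∘ₗ (D p).subtype) with hσm
    have hσme : ∀ (k : ↥𝔨) (a b : ↥(D p)), (b : V) = aV k (a : V) →
        σm b = aV k (σm a) := by
      intro k a b hab
      show (πN (b : V) : V) = aV k (πN (a : V) : V)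
      rw [hab]
      exact hπNe k (a : V)
    have hσm0 : σm ≠ 0 := by
      intro h0
      apply hx0
      have h1 : σm ⟨x, hxD⟩ = 0 := by rw [h0]; rfl
      exact h1
    have hDne : D p ≠ ⊥ := by
      intro hbot
      apply hx0
      have h1 : x = 0 := by
        have := hxD
        rw [hbot] at this
        exact this
      rw [h1, map_zero]
      rfl
    obtain ⟨hminj, hPst, hPirr⟩ :=
      range_data (hDst p) ⟨hDne, hDirr p⟩ σm hσme hσm0
    have hPV₁ : LinearMap.range σm ≤ V₁ := by
      intro w hw
      obtain ⟨u, rfl⟩ := LinearMap.mem_range.1 hw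
      exact (πN ((D p).subtype u)).2.1
    have hPV₂ : LinearMap.range σm ≤ V₂ := by
      intro w hw
      obtain ⟨u, rfl⟩ := LinearMap.mem_range.1 hw
      exact (πN ((D p).subtype u)).2.2
    obtain ⟨p₁, hp₁, e₁, he₁⟩ := key PS₁ (LinearMap.range σm) hPst hPirr
      (by rw [← hV₁eq]; exact hPV₁)
    obtain ⟨p₂, hp₂, e₂, he₂⟩ := key PS₂ (LinearMap.range σm) hPst hPirr hPV₂
    have he₂s := eqvp_symm e₂ he₂ (hCstT p₂.1 p₂.2)
    have hp₁1 : p₁.1 = 1 := hp₁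
    have hne1 : p₂.1⁻¹ ≠ 1 := inv_ne_one.mpr hp₂
    apply hdistinct p₂.1⁻¹ hne1
      (C p₁.2) (fun X hX w hw => hCst p₁.2 ⟨X, hX⟩ w hw) (hCne p₁.2)
      (fun Wx hle hst => hCirr p₁.2 Wx hle ((hstL Wx).1 hst))
      (C p₂.2) (fun X hX w hw => hCstT p₂.1 p₂.2 ⟨X, hX⟩ w hw) (hCne p₂.2)
      (fun Wx hle hst => hCirr p₂.2 Wx hle (hstTL p₂.1 Wx ((hstT p₂.1 Wx).1 hst)))
    refine ⟨e₁.trans e₂.symm, ?_⟩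
    intro X hX w
    apply Subtype.ext
    have hstep : (((e₁.trans e₂.symm) ⟨⁅X, (w : L)⁆,
        (fun X hX w hw => hCst p₁.2 ⟨X, hX⟩ w hw) X hX (w : L) w.2⟩ : ↥(C p₂.2)) : L)
        = aT p₂.1 ⟨X, hX⟩ (((e₁.trans e₂.symm) w : ↥(C p₂.2)) : L) := by
      have hcomp2 := eqvp_trans he₁ he₂s
      refine hcomp2 ⟨X, hX⟩ w ⟨⁅X, (w : L)⁆, _⟩ ?_
      show ⁅X, (w : L)⁆ = aT p₁.1 ⟨X, hX⟩ (w : L)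
      show ⁅X, (w : L)⁆ = ⁅φ p₁.1⁻¹ X, (w : L)⁆
      rw [hp₁1, inv_one, hφone]
    exact hstep
  -- IsCompl V₂ V₁ and the projection π₂
  obtain ⟨T₁, hV₁T₁, hT₁st, hT₁c⟩ := compl_exists aV D hDst hDirr hDtop V₂ V₁
    hV₂st hV₁st (by rw [inf_comm]; exact hV12)
  have hT₁V₁ : T₁ = V₁ := by
    have h2 := sup_inf_assoc_of_le (x := V₁) V₂ hV₁T₁
    rw [hV₁V₂top, top_inf_eq, disjoint_iff.1 hT₁c.disjoint, sup_bot_eq] at h2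
    exact h2
  rw [hT₁V₁] at hT₁c
  set π₂ := V₂.linearProjOfIsCompl V₁ hT₁c with hπ₂
  have hπ₂e := proj_eqv aV hT₁c hV₂st hV₁st
  -- data about τ and ι
  have hτst : St aV τ := (hstV τ).1 hτstab
  have hτAmb : AmbIrr aV τ :=
    ⟨hτne, fun Wx hle hst => hτirr Wx hle ((hstV Wx).2 hst)⟩
  have hιe : ∀ (k : ↥𝔨) (x y : ↥τ), (y : V) = aV k (x : V) → ι y = aL k (ι x) := by
    intro k x y h
    have hy : y = ⟨⁅(k : 𝔤), (x : V)⁆, hτstab _ k.2 _ x.2⟩ := Subtype.ext h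
    rw [hy]
    exact hιeq (k : 𝔤) k.2 x
  have hι0 : ι ≠ 0 := by
    intro h0
    obtain ⟨x, hx, hx0⟩ := (Submodule.ne_bot_iff τ).1 hτne
    apply hx0
    have h1 : ι ⟨x, hx⟩ = 0 := by rw [h0]; rfl
    have h2 := hFι ⟨x, hx⟩
    rw [h1, map_zero] at h2
    exact h2.symm
  obtain ⟨hιinj', hιRst, hιRirr⟩ := range_data hτst hτAmb ι hιe hι0
  -- multiplicity one
  obtain ⟨f₀, hf₀0, hf₀e, hf₀cl⟩ := hmult
  obtain ⟨c₀, hc₀⟩ := hf₀cl ι hιeq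
  have hc₀0 : c₀ ≠ 0 := by
    intro h0
    apply hι0
    rw [hc₀, h0, zero_smul]
  -- the main multiplicity-one statement in V
  have star : ∀ g : ↥τ →ₗ[ℂ] V,
      (∀ (k : ↥𝔨) (x y : ↥τ), (y : V) = aV k (x : V) → g y = aV k (g x)) →
      ∃ c : ℂ, ∀ t : ↥τ, g t = c • (t : V) := by
    intro g hg
    by_cases hg0 : g = 0
    · refine ⟨0, fun t => ?_⟩
      rw [hg0, zero_smul]
      rfl
    set g₂ : ↥τ →ₗ[ℂ] V := V₂.subtype ∘ₗ (π₂ ∘ₗ g) with hg₂def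
    by_cases hg₂0 : g₂ = 0
    · -- g maps into V₁ ; lift through F
      have hkerst : St aL (LinearMap.ker F) := by
        intro k x hx
        rw [LinearMap.mem_ker] at hx ⊢
        show F ⁅(k : 𝔤), x⁆ = 0
        rw [hFbr, hx, lie_zero]
      obtain ⟨Q, -, hQst, hQc⟩ := compl_exists aL C hCst hCirr hCtop
        (LinearMap.ker F) ⊥ hkerst (St.bot aL) (by simp)
      have hgV₁ : ∀ t : ↥τ, g t ∈ V₁ := by
        intro t
        have h1 : π₂ (g t) = 0 := by
          have h2 := LinearMap.congr_fun hg₂0 t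
          exact Subtype.ext h2
        exact (Submodule.linearProjOfIsCompl_apply_eq_zero_iff hT₁c).1 h1
      have hFQV₁ : ∀ v ∈ V₁, ∃ q ∈ Q, F q = v := by
        intro v hv
        obtain ⟨x, rfl⟩ := LinearMap.mem_range.1 hv
        have hx : x ∈ LinearMap.ker F ⊔ Q := by
          rw [codisjoint_iff.1 hQc.codisjoint]
          trivial
        obtain ⟨a, ha, b, hb, rfl⟩ := Submodule.mem_sup.1 hx
        exact ⟨b, hb, by rw [map_add, LinearMap.mem_ker.1 ha, zero_add]⟩
      set σQ : ↥Q →ₗ[ℂ] ↥V₁ :=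
        LinearMap.codRestrict V₁ (F ∘ₗ Q.subtype) (fun q => ⟨(q : L), rfl⟩) with hσQ
      have hσQinj : Function.Injective σQ := by
        intro a b hab
        have h1 : F (a : L) = F (b : L) := congrArg Subtype.val hab
        have h2 : (a : L) - (b : L) ∈ LinearMap.ker F ⊓ Q := by
          rw [Submodule.mem_inf]
          exact ⟨by rw [LinearMap.mem_ker, map_sub, h1, sub_self],
            Submodule.sub_mem Q a.2 b.2⟩
        rw [disjoint_iff.1 hQc.disjoint] at h2
        have h3 : (a : L) - (b : L) = 0 := h2
        exact Subtype.ext (sub_eq_zero.1 h3)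
      have hσQsurj : Function.Surjective σQ := by
        intro w
        obtain ⟨q, hq, hqw⟩ := hFQV₁ (w : V) w.2
        exact ⟨⟨q, hq⟩, Subtype.ext hqw⟩
      set eQ : ↥Q ≃ₗ[ℂ] ↥V₁ := LinearEquiv.ofBijective σQ ⟨hσQinj, hσQsurj⟩ with heQ
      set h : ↥τ →ₗ[ℂ] L :=
        Q.subtype ∘ₗ (eQ.symm.toLinearMap ∘ₗ LinearMap.codRestrict V₁ g hgV₁)
        with hhdef
      have hFh : ∀ t : ↥τ, F (h t) = g t := by
        intro t
        have h1 : eQ (eQ.symm (LinearMap.codRestrict V₁ g hgV₁ t))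
            = LinearMap.codRestrict V₁ g hgV₁ t := eQ.apply_symm_apply _
        have h2 := congrArg Subtype.val h1
        exact h2
      have hhQ : ∀ t : ↥τ, h t ∈ Q := fun t => (eQ.symm _).2
      have hhe : ∀ (X : 𝔤) (hX : X ∈ 𝔨) (t : ↥τ),
          h ⟨⁅X, (t : V)⁆, hτstab X hX (t : V) t.2⟩ = ⁅X, h t⁆ := by
        intro X hX t
        have hgt' : g ⟨⁅X, (t : V)⁆, hτstab X hX (t : V) t.2⟩ = ⁅X, g t⁆ :=
          hg ⟨X, hX⟩ t ⟨⁅X, (t : V)⁆, hτstab X hX (t : V) t.2⟩ rfl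
        have hFeq : F (h ⟨⁅X, (t : V)⁆, hτstab X hX (t : V) t.2⟩) = F ⁅X, h t⁆ := by
          rw [hFh, hgt', hFbr, hFh]
        have hsub : h ⟨⁅X, (t : V)⁆, hτstab X hX (t : V) t.2⟩ - ⁅X, h t⁆
            ∈ LinearMap.ker F ⊓ Q := by
          rw [Submodule.mem_inf]
          exact ⟨by rw [LinearMap.mem_ker, map_sub, hFeq, sub_self],
            Submodule.sub_mem Q (hhQ _) (hQst ⟨X, hX⟩ _ (hhQ t))⟩
        rw [disjoint_iff.1 hQc.disjoint] at hsub
        have h3 : h ⟨⁅X, (t : V)⁆, hτstab X hX (t : V) t.2⟩ - ⁅X, h t⁆ = 0 := hsub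
        exact sub_eq_zero.1 h3
      obtain ⟨c₁, hc₁⟩ := hf₀cl h hhe
      refine ⟨c₁ * c₀⁻¹, ?_⟩
      intro t
      have h1 : F (h t) = g t := hFh t
      have h2 : h t = c₁ • f₀ t := by rw [hc₁]; rfl
      have h3 : ι t = c₀ • f₀ t := by rw [hc₀]; rfl
      have h4 := hFι t
      rw [h3, map_smul] at h4
      rw [h2, map_smul] at h1
      rw [← h1, ← h4, smul_smul, mul_assoc, inv_mul_cancel₀ hc₀0, mul_one]
    · exfalso
      have hge : ∀ (k : ↥𝔨) (x y : ↥τ), (y : V) = aV k (x : V) →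
          g₂ y = aV k (g₂ x) := by
        intro k x y h
        show (π₂ (g y) : V) = aV k (π₂ (g x) : V)
        rw [hg k x y h]
        exact hπ₂e k (g x)
      obtain ⟨hg₂inj, hS₂st, hS₂irr⟩ := range_data hτst hτAmb g₂ hge hg₂0
      have hS₂V₂ : LinearMap.range g₂ ≤ V₂ := by
        intro w hw
        obtain ⟨t, rfl⟩ := LinearMap.mem_range.1 hw
        exact (π₂ (g t)).2
      obtain ⟨p, hpPS, e, he⟩ := key PS₂ (LinearMap.range g₂) hS₂st hS₂irr hS₂V₂
      set e2 : ↥τ ≃ₗ[ℂ] ↥(LinearMap.range g₂) := LinearEquiv.ofInjective g₂ hg₂inj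
        with he2
      have he2e : EqvP aV aV τ (LinearMap.range g₂) e2 := by
        intro k x y h
        show ((e2 y : ↥(LinearMap.range g₂)) : V) = aV k ((e2 x : ↥(LinearMap.range g₂)) : V)
        rw [he2]
        rw [LinearEquiv.ofInjective_apply, LinearEquiv.ofInjective_apply]
        exact hge k x y h
      set eι : ↥τ ≃ₗ[ℂ] ↥(LinearMap.range ι) := LinearEquiv.ofInjective ι hιinj
        with heι
      have heιe : EqvP aV aL τ (LinearMap.range ι) eι := by
        intro k x y h
        show ((eι y : ↥(LinearMap.range ι)) : L) = aL k ((eι x : ↥(LinearMap.range ι)) : L)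
        rw [heι]
        rw [LinearEquiv.ofInjective_apply, LinearEquiv.ofInjective_apply]
        exact hιe k x y h
      have hesym := eqvp_symm e he (hCstT p.1 p.2)
      have heιsym := eqvp_symm eι heιe hτst
      have hbig := eqvp_trans (eqvp_trans heιsym he2e) hesym
      have hne1 : p.1⁻¹ ≠ 1 := inv_ne_one.mpr hpPS
      apply hdistinct p.1⁻¹ hne1
        (LinearMap.range ι) (fun X hX w hw => hιRst ⟨X, hX⟩ w hw) hιRirr.1
        (fun Wx hle hst => hιRirr.2 Wx hle ((hstL Wx).1 hst))
        (C p.2) (fun X hX w hw => hCstT p.1 p.2 ⟨X, hX⟩ w hw) (hCne p.2)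
        (fun Wx hle hst => hCirr p.2 Wx hle (hstTL p.1 Wx ((hstT p.1 Wx).1 hst)))
      refine ⟨(eι.symm.trans e2).trans e.symm, ?_⟩
      intro X hX w
      apply Subtype.ext
      refine hbig ⟨X, hX⟩ w ⟨⁅X, (w : L)⁆, _⟩ ?_
      rfl
  -- conclusion
  obtain ⟨W', ⟨hW'g, hW'Γ⟩, hWc⟩ := hcompl W hWg hWΓ
  set aVg : 𝔤 → Module.End ℂ V := fun X => actEnd 𝔤 V X with haVg
  have hWst : St aVg W := fun X x hx => hWg X x hx
  have hW'st : St aVg W' := fun X x hx => hW'g X x hx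
  set pW := W.linearProjOfIsCompl W' hWc with hpW
  have hpWe := proj_eqv aVg hWc hWst hW'st
  set g : ↥τ →ₗ[ℂ] V := W.subtype ∘ₗ (pW ∘ₗ τ.subtype) with hgdef
  have hge : ∀ (k : ↥𝔨) (x y : ↥τ), (y : V) = aV k (x : V) → g y = aV k (g x) := by
    intro k x y h
    show (pW (y : V) : V) = aV k (pW (x : V) : V)
    rw [h]
    exact hpWe (k : 𝔤) (x : V)
  obtain ⟨c, hc⟩ := star g hge
  have hcv₀ : (pW v₀ : V) = c • v₀ := hc ⟨v₀, hv₀τ⟩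
  have hidem : c • v₀ = (c * c) • v₀ := by
    have h1 : pW ((pW v₀ : V)) = pW v₀ :=
      Submodule.linearProjOfIsCompl_apply_left hWc (pW v₀)
    have h2 : pW ((c : ℂ) • v₀) = pW v₀ := by rw [← hcv₀]; exact h1
    have h3 : (pW ((c : ℂ) • v₀) : V) = c • (pW v₀ : V) := by rw [map_smul]; rfl
    rw [h2, hcv₀] at h3
    rw [smul_smul] at h3
    exact h3
  have hcc : c = 0 ∨ c = 1 := by
    have h4 : (c - c * c) • v₀ = 0 := by
      rw [sub_smul, hidem, sub_self]
    rcases smul_eq_zero.1 h4 with h5 | h5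
    · have h6 : c * (c - 1) = 0 := by linear_combination -h5
      rcases mul_eq_zero.1 h6 with h7 | h7
      · left; exact h7
      · right
        exact sub_eq_zero.1 h7
    · exact absurd h5 hv₀
  rcases hcc with h0 | h1
  · left
    have hv₀W' : v₀ ∈ W' := by
      have h1 : pW v₀ = 0 := by
        apply Subtype.ext
        rw [hcv₀, h0, zero_smul]
        rfl
      exact (Submodule.linearProjOfIsCompl_apply_eq_zero_iff hWc).1 h1
    have hW'top : W' = ⊤ := hgen W' (fun γ => hW'Γ γ v₀ hv₀W') hW'g
    have h2 := disjoint_iff.1 hWc.disjoint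
    rw [hW'top, inf_top_eq] at h2
    exact h2
  · right
    have hv₀W : v₀ ∈ W := by
      have h2 : (pW v₀ : V) = v₀ := by rw [hcv₀, h1, one_smul]
      rw [← h2]
      exact (pW v₀).2
    exact hgen W (fun γ => hWΓ γ v₀ hv₀W) hWg
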